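/- Define the adjoining singular words v_n by v_n = a · s_{n+1}^{d_{n+2}-1} s_n · b^{-1} for odd n and v_n = b · s_{n+1}^{d_{n+2}-1} s_n · a^{-1} for even n (i.e., the last letter of s_{n+1}^{d_{n+2}-1} s_n is removed and the appropriate letter prepended). Then each v_n is a palindrome for all n ≥ -1. -/

import Mathlib

/-- Letters: `a` is `false`, `b` is `true`. -/
abbrev Word := List Bool

/-- `wpow w k` is the `k`-fold concatenation `w^k`. -/
def wpow (w : Word) (k : ℕ) : Word := (List.replicate k w).flatten

lemma wpow_succ (w : Word) (k : ℕ) : wpow w (k+1) = w ++ wpow w k := by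
  simp [wpow, List.replicate_succ]

lemma wpow_succ' (w : Word) (k : ℕ) : wpow w (k+1) = wpow w k ++ w := by
  simp [wpow, List.replicate_succ']

lemma wpow_reverse (w : Word) (k : ℕ) : (wpow w k).reverse = wpow w.reverse k := by
  induction k with
  | zero => simp [wpow]
  | succ k ih => rw [wpow_succ, wpow_succ']; simp [ih]

/-- If `u ++ T = T ++ u'` then `u^k ++ T = T ++ u'^k`. -/
lemma wpow_comm {u u' T : Word} (h : u ++ T = T ++ u') (k : ℕ) :
    wpow u k ++ T = T ++ wpow u' k := by
  induction k with
  | zero => simp [wpow]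
  | succ k ih =>
    rw [wpow_succ', List.append_assoc, h, ← List.append_assoc, ih,
      List.append_assoc, ← wpow_succ']

lemma wpow_rotate (u v : Word) (k : ℕ) : wpow (u ++ v) k ++ u = u ++ wpow (v ++ u) k :=
  wpow_comm (by simp) k

lemma cons_rep (a : Bool) (n : ℕ) :
    a :: List.replicate n a = List.replicate n a ++ [a] := by
  rw [← List.replicate_succ', List.replicate_succ]

/-- Each adjoining singular word `vₙ` (the word `sₙ₊₁^(dₙ₊₂ - 1) sₙ` with its last
letter removed and `a` (if `n` odd) or `b` (if `n` even) prepended) is a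
palindrome, for all `n ≥ -1`. -/
theorem adjoining_singular_word_palindrome (d : ℤ → ℕ) (s : ℤ → Word)
    (hd : ∀ n : ℤ, 1 ≤ n → 1 ≤ d n)
    (hs1 : s (-1) = [true]) (hs0 : s 0 = [false])
    (hs : ∀ n : ℤ, 1 ≤ n → s n = wpow (s (n - 1)) (d n) ++ s (n - 2))
    (v : ℤ → Word)
    (hv : ∀ n : ℤ, -1 ≤ n → v n = (if Odd n then [false] else [true]) ++ (wpow (s (n + 1)) (d (n + 2) - 1) ++ s n).dropLast)
    (hvm2 : v (-2) = []) :
    ∀ n : ℤ, -1 ≤ n → (v n).Palindrome := by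
  set χ : ℤ → Bool := fun n => if Odd n then false else true with hχ
  have hχsucc : ∀ n : ℤ, χ (n + 1) = !(χ n) := by
    intro n
    have h2 : Odd (n+1) ↔ ¬ Odd n := by rw [Int.odd_iff, Int.odd_iff]; omega
    by_cases h : Odd n
    · have hh : ¬ Odd (n+1) := by rw [h2]; exact not_not_intro h
      simp [hχ, h, hh]
    · have hh : Odd (n+1) := h2.mpr h
      simp [hχ, h, hh]
  have hwfalse : ∀ k : ℕ, wpow [false] k = List.replicate k false := by
    intro k
    induction k with
    | zero => simp [wpow]
    | succ k ih => rw [wpow_succ, ih, List.replicate_succ]; rfl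
  have h1 : s 1 = List.replicate (d 1) false ++ [true] := by
    have h := hs 1 (by norm_num)
    rw [show (1:ℤ)-1 = 0 by ring, show (1:ℤ)-2 = -1 by ring, hs0, hs1, hwfalse] at h
    exact h
  -- main induction
  have main : ∀ m : ℕ, ∃ A B : Word, A.reverse = A ∧ B.reverse = B ∧
      s ((m:ℤ)+1) = A ++ [χ ((m:ℤ)+1), !(χ ((m:ℤ)+1))] ∧
      s ((m:ℤ)+2) = B ++ [!(χ ((m:ℤ)+1)), χ ((m:ℤ)+1)] ∧
      A ++ [χ ((m:ℤ)+1), !(χ ((m:ℤ)+1))] ++ B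
        = B ++ [!(χ ((m:ℤ)+1)), χ ((m:ℤ)+1)] ++ A := by
    intro m
    induction m with
    | zero =>
      have hodd1 : Odd (1:ℤ) := ⟨0, by ring⟩
      have hx1 : χ 1 = false := by simp [hχ, hodd1]
      have ez1 : ((0:ℕ):ℤ)+1 = 1 := by norm_num
      have ez2 : ((0:ℕ):ℤ)+2 = 2 := by norm_num
      rw [ez1, ez2, hx1]
      simp only [Bool.not_false]
      obtain ⟨e, he⟩ : ∃ e, d 1 = e + 1 := ⟨d 1 - 1, by have := hd 1 (by norm_num); omega⟩
      obtain ⟨f, hf⟩ : ∃ f, d 2 = f + 1 := ⟨d 2 - 1, by have := hd 2 (by norm_num); omega⟩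
      have h2 : s 2 = wpow (s 1) (d 2) ++ [false] := by
        have h := hs 2 (by norm_num)
        rw [show (2:ℤ)-1 = 1 by ring, show (2:ℤ)-2 = 0 by ring, hs0] at h
        exact h
      have hre : List.replicate (d 1) false = List.replicate e false ++ [false] := by
        rw [he]; exact List.replicate_succ'
      refine ⟨List.replicate e false, wpow (s 1) f ++ List.replicate (d 1) false,
        List.reverse_replicate, ?_, ?_, ?_, ?_⟩
      · have hstep : (wpow (s 1) f ++ List.replicate (d 1) false).reverse
            = List.replicate (d 1) false ++ wpow ((s 1).reverse) f := by
          rw [List.reverse_append, List.reverse_replicate, wpow_reverse]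
        rw [hstep, h1]
        have hsr : (List.replicate (d 1) false ++ [true]).reverse
            = [true] ++ List.replicate (d 1) false := by simp
        rw [hsr]
        exact (wpow_rotate (List.replicate (d 1) false) [true] f).symm
      · rw [h1, hre]; simp [List.append_assoc]
      · rw [h2, hf, wpow_succ', h1]; simp [List.append_assoc]
      · have hL : (List.replicate e false ++ [false, true]) ++ (wpow (s 1) f ++ List.replicate (d 1) false)
            = wpow (s 1) (f+1) ++ List.replicate (d 1) false := by
          rw [wpow_succ, h1, hre]; simp [List.append_assoc, cons_rep]
        have hR : ((wpow (s 1) f ++ List.replicate (d 1) false) ++ [true, false]) ++ List.replicate e false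
            = wpow (s 1) (f+1) ++ List.replicate (d 1) false := by
          rw [wpow_succ', h1, hre]; simp [List.append_assoc, cons_rep]
        exact hL.trans hR.symm
    | succ m ih =>
      obtain ⟨A, B, hA, hB, hsA, hsB, hrel⟩ := ih
      obtain ⟨k, hk⟩ : ∃ k, d ((m:ℤ)+3) = k + 1 :=
        ⟨d ((m:ℤ)+3) - 1, by have := hd ((m:ℤ)+3) (by omega); omega⟩
      set x := χ ((m:ℤ)+1) with hxdef
      have hxx : χ ((((m+1:ℕ)):ℤ)+1) = !x := by
        rw [show ((((m+1:ℕ)):ℤ)+1) = ((m:ℤ)+1) + 1 by push_cast; ring, hχsucc]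
      have e1 : (((m+1:ℕ)):ℤ)+1 = (m:ℤ)+2 := by push_cast; ring
      have e2 : (((m+1:ℕ)):ℤ)+2 = (m:ℤ)+3 := by push_cast; ring
      rw [hxx]
      simp only [Bool.not_not]
      rw [e1, e2]
      have hcomm : (B ++ [!x, x]) ++ (A ++ [x, !x] ++ B)
          = (A ++ [x, !x] ++ B) ++ ([x, !x] ++ B) := by
        calc (B ++ [!x, x]) ++ (A ++ [x, !x] ++ B)
            = (B ++ [!x, x] ++ A) ++ ([x, !x] ++ B) := by simp [List.append_assoc]
          _ = (A ++ [x, !x] ++ B) ++ ([x, !x] ++ B) := by rw [← hrel]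
      refine ⟨B, wpow (B ++ [!x, x]) k ++ (A ++ [x, !x] ++ B), hB, ?_, hsB, ?_, ?_⟩
      · have hrevu : (B ++ [!x, x]).reverse = [x, !x] ++ B := by simp [hB]
        have hrevT : (A ++ [x, !x] ++ B).reverse = B ++ [!x, x] ++ A := by simp [hA, hB]
        have hstep : (wpow (B ++ [!x, x]) k ++ (A ++ [x, !x] ++ B)).reverse
            = (A ++ [x, !x] ++ B).reverse ++ wpow ((B ++ [!x, x]).reverse) k := by
          rw [List.reverse_append, wpow_reverse]
        rw [hstep, hrevu, hrevT, ← hrel]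
        exact (wpow_comm hcomm k).symm
      · have h3 := hs ((m:ℤ)+3) (by omega)
        rw [show ((m:ℤ)+3-1) = (m:ℤ)+2 by ring, show ((m:ℤ)+3-2) = (m:ℤ)+1 by ring,
          hk, hsB, hsA] at h3
        rw [h3, wpow_succ']
        calc (wpow (B ++ [!x, x]) k ++ (B ++ [!x, x])) ++ (A ++ [x, !x])
            = wpow (B ++ [!x, x]) k ++ ((B ++ [!x, x] ++ A) ++ [x, !x]) := by
              simp [List.append_assoc]
          _ = wpow (B ++ [!x, x]) k ++ ((A ++ [x, !x] ++ B) ++ [x, !x]) := by rw [← hrel]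
          _ = (wpow (B ++ [!x, x]) k ++ (A ++ [x, !x] ++ B)) ++ [x, !x] := by
              simp [List.append_assoc]
      · have swap : (B ++ [!x, x]) ++ wpow (B ++ [!x, x]) k
            = wpow (B ++ [!x, x]) k ++ (B ++ [!x, x]) := by
          rw [← wpow_succ, ← wpow_succ']
        calc B ++ [!x, x] ++ (wpow (B ++ [!x, x]) k ++ (A ++ [x, !x] ++ B))
            = ((B ++ [!x, x]) ++ wpow (B ++ [!x, x]) k) ++ (A ++ [x, !x] ++ B) := by
              simp [List.append_assoc]
          _ = (wpow (B ++ [!x, x]) k ++ (B ++ [!x, x])) ++ (A ++ [x, !x] ++ B) := by rw [swap]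
          _ = wpow (B ++ [!x, x]) k ++ ((B ++ [!x, x]) ++ (A ++ [x, !x] ++ B)) := by
              simp [List.append_assoc]
          _ = wpow (B ++ [!x, x]) k ++ ((A ++ [x, !x] ++ B) ++ ([x, !x] ++ B)) := by rw [hcomm]
          _ = (wpow (B ++ [!x, x]) k ++ (A ++ [x, !x] ++ B)) ++ [x, !x] ++ B := by
              simp [List.append_assoc]
  -- conclusion
  intro n hn
  rcases eq_or_lt_of_le hn with h | h
  · -- n = -1
    obtain rfl : n = -1 := h.symm
    have hvn := hv (-1) (by norm_num)
    obtain ⟨e, he⟩ : ∃ e, d 1 = e + 1 := ⟨d 1 - 1, by have := hd 1 (by norm_num); omega⟩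
    have hoddm1 : Odd (-1:ℤ) := ⟨-1, by ring⟩
    rw [show (-1:ℤ)+1 = 0 by ring, show (-1:ℤ)+2 = 1 by ring, hs0, hs1,
      if_pos hoddm1, he] at hvn
    simp only [Nat.add_sub_cancel] at hvn
    rw [hwfalse, List.dropLast_concat] at hvn
    rw [hvn]
    exact List.Palindrome.of_reverse_eq (by simp [cons_rep])
  · rcases eq_or_lt_of_le (show (0:ℤ) ≤ n by omega) with h0 | h0
    · -- n = 0
      obtain rfl : n = 0 := h0.symm
      have hvn := hv 0 (by norm_num)
      obtain ⟨f, hf⟩ : ∃ f, d 2 = f + 1 := ⟨d 2 - 1, by have := hd 2 (by norm_num); omega⟩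
      have hnotodd : ¬ Odd (0:ℤ) := by norm_num
      rw [show (0:ℤ)+1 = 1 by ring, show (0:ℤ)+2 = 2 by ring, hs0, if_neg hnotodd, hf] at hvn
      simp only [Nat.add_sub_cancel] at hvn
      rw [List.dropLast_concat] at hvn
      rw [hvn, h1]
      apply List.Palindrome.of_reverse_eq
      have hstep : ([true] ++ wpow (List.replicate (d 1) false ++ [true]) f).reverse
          = wpow (([true] ++ List.replicate (d 1) false)) f ++ [true] := by
        rw [List.reverse_append, wpow_reverse]
        simp
      rw [hstep]
      exact wpow_rotate [true] (List.replicate (d 1) false) f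
    · -- n ≥ 1
      obtain ⟨m, hm⟩ : ∃ m : ℕ, n = (m:ℤ) + 1 := by
        obtain ⟨m, hm⟩ := Int.eq_ofNat_of_zero_le (show (0:ℤ) ≤ n - 1 by omega)
        exact ⟨m, by omega⟩
      obtain ⟨A, B, hA, hB, hsA, hsB, hrel⟩ := main m
      set x := χ ((m:ℤ)+1) with hxdef
      obtain ⟨e, he⟩ : ∃ e, d (n + 2) = e + 1 :=
        ⟨d (n+2) - 1, by have := hd (n+2) (by omega); omega⟩
      have hvn := hv n hn
      have hif : (if Odd n then ([false]:Word) else [true]) = [x] := by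
        rw [hxdef, hm]
        by_cases hodd : Odd ((m:ℤ)+1) <;> simp [hχ, hodd]
      have hsn1 : s (n+1) = B ++ [!x, x] := by
        rw [hm, show ((m:ℤ)+1)+1 = (m:ℤ)+2 by ring]; exact hsB
      have hsn : s n = A ++ [x, !x] := by rw [hm]; exact hsA
      rw [hif, he, hsn1, hsn] at hvn
      simp only [Nat.add_sub_cancel] at hvn
      have hdrop : (wpow (B ++ [!x, x]) e ++ (A ++ [x, !x])).dropLast
          = (wpow (B ++ [!x, x]) e ++ A) ++ [x] := by
        rw [show wpow (B ++ [!x, x]) e ++ (A ++ [x, !x])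
            = ((wpow (B ++ [!x, x]) e ++ A) ++ [x]) ++ [!x] by simp [List.append_assoc],
          List.dropLast_concat]
      rw [hdrop] at hvn
      have key : wpow (B ++ [!x, x]) e ++ A = A ++ wpow ([x, !x] ++ B) e := by
        apply wpow_comm
        rw [show (B ++ [!x, x]) ++ A = B ++ [!x, x] ++ A by rfl, ← hrel]
        simp [List.append_assoc]
      have haux : ([x] ++ ((wpow (B ++ [!x, x]) e ++ A) ++ [x])).reverse
          = [x] ++ ((wpow (B ++ [!x, x]) e ++ A) ++ [x]) := by
        have hrev : (wpow (B ++ [!x, x]) e ++ A).reverse = A ++ wpow ([x, !x] ++ B) e := by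
          rw [List.reverse_append, wpow_reverse, hA]
          have : (B ++ [!x, x]).reverse = [x, !x] ++ B := by simp [hB]
          rw [this]
        calc ([x] ++ ((wpow (B ++ [!x, x]) e ++ A) ++ [x])).reverse
            = ([x] ++ (wpow (B ++ [!x, x]) e ++ A).reverse) ++ [x] := by
              simp [List.append_assoc]
          _ = ([x] ++ (A ++ wpow ([x, !x] ++ B) e)) ++ [x] := by rw [hrev]
          _ = ([x] ++ (wpow (B ++ [!x, x]) e ++ A)) ++ [x] := by rw [← key]
          _ = [x] ++ ((wpow (B ++ [!x, x]) e ++ A) ++ [x]) := by simp [List.append_assoc]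
      rw [hvn]
      exact List.Palindrome.of_reverse_eq haux
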